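/- Let X_n be the Class CI Wigner-type ensemble, let m ≥ 3, and let g ∈ D_{2m} be any element of the dihedral group (a cyclic shift γ^ν or a reflection τγ^ν). Then lim_{n→∞} n^{−m} · Σ_{P ∈ S_n^{good}(π̂_g)} ∏_{l=1}^m E[a_n(P_{1,l})·a_n(P_{2,g(l)})] equals 0 if m is odd, and equals 2^{m+1}·σ^{2m} if m is even; in particular this limit is the same as for the Class DIII ensemble. -/

import Mathlib

open MeasureTheory ProbabilityTheory Matrix Filter

noncomputable section

/-- The (unnormalized) class CI block matrix built from `X₁, X₂`; its `(p,q)` entry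
is `a_n(p,q)`, the `(p,q)` entry of `√(2n)·X_n`. `[2n]` is encoded as `Fin n ⊕ Fin n`. -/
def cIBlock {n : ℕ} (X₁ X₂ : Matrix (Fin n) (Fin n) ℝ) :
    Matrix (Fin n ⊕ Fin n) (Fin n ⊕ Fin n) ℝ :=
  Matrix.fromBlocks X₁ X₂ X₂ (-X₁)

/-- The space `M_n^{CI}`: block matrices `[[X₁,X₂],[X₂,−X₁]]` with `X₁, X₂`
real symmetric. -/
def MCI (n : ℕ) : Set (Matrix (Fin n ⊕ Fin n) (Fin n ⊕ Fin n) ℝ) :=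
  {M | ∃ X₁ X₂ : Matrix (Fin n) (Fin n) ℝ,
    X₁ᵀ = X₁ ∧ X₂ᵀ = X₂ ∧ M = Matrix.fromBlocks X₁ X₂ X₂ (-X₁)}

/-- The coordinate functional `X ↦ X_{p,q}` on `M_n^{CI}` is nonzero. -/
def NonzeroAtCI (n : ℕ) (P : (Fin n ⊕ Fin n) × (Fin n ⊕ Fin n)) : Prop :=
  ∃ M ∈ MCI n, M P.1 P.2 ≠ 0

/-- `(p,q) ∼ (r,s)`: both coordinate functionals on `M_n^{CI}` are nonzero and
equal up to sign. -/
def simCI (n : ℕ) (P Q : (Fin n ⊕ Fin n) × (Fin n ⊕ Fin n)) : Prop :=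
  NonzeroAtCI n P ∧ NonzeroAtCI n Q ∧
    ((∀ M ∈ MCI n, M Q.1 Q.2 = M P.1 P.2) ∨
      (∀ M ∈ MCI n, M Q.1 Q.2 = -(M P.1 P.2)))

/-- A multi-index `P = (P_{i,l}) = ((p_{i,l},q_{i,l}))` is consistent if
`q_{i,l} = p_{i,l+1}` cyclically, for `i = 1, 2`. -/
def IsConsistent {n m : ℕ} [NeZero m]
    (P : Fin 2 → Fin m → ((Fin n ⊕ Fin n) × (Fin n ⊕ Fin n))) : Prop :=
  ∀ i l, (P i l).2 = (P i (l + 1)).1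

/-- `P ∈ S_n^{good}(π̂_g)`: `P` is a consistent multi-index, every `P_{i,l}` lies in
the domain of `∼`, and the `∼`-relations among the `2m` index pairs are exactly those
given by the pair partition `π̂_g = {{(1,l),(2,g(l))} : l ∈ [m]}`. -/
def SGoodCI (n m : ℕ) [NeZero m] (g : Fin m → Fin m)
    (P : Fin 2 → Fin m → ((Fin n ⊕ Fin n) × (Fin n ⊕ Fin n))) : Prop :=
  IsConsistent P ∧ (∀ i l, NonzeroAtCI n (P i l)) ∧
    ∀ i l i' l', simCI n (P i l) (P i' l') ↔
      ((i = i' ∧ l = l') ∨ (i = 0 ∧ i' = 1 ∧ l' = g l) ∨ (i = 1 ∧ i' = 0 ∧ l = g l'))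


namespace CIaux

variable {n : ℕ}

def vl : Fin n ⊕ Fin n → Fin n := Sum.elim id id
def sd : Fin n ⊕ Fin n → Bool := Sum.isRight
def emb (b : Bool) (a : Fin n) : Fin n ⊕ Fin n := bif b then Sum.inr a else Sum.inl a
def epsR (p q : Fin n ⊕ Fin n) : ℝ := if sd p && sd q then -1 else 1
def key (p q : Fin n ⊕ Fin n) : Bool × Sym2 (Fin n) := (xor (sd p) (sd q), s(vl p, vl q))

@[simp] lemma sd_emb (b : Bool) (a : Fin n) : sd (emb b a) = b := by cases b <;> rfl
@[simp] lemma vl_emb (b : Bool) (a : Fin n) : vl (emb b a) = a := by cases b <;> rfl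
@[simp] lemma emb_sd_vl (p : Fin n ⊕ Fin n) : emb (sd p) (vl p) = p := by cases p <;> rfl

lemma epsR_ne_zero (p q : Fin n ⊕ Fin n) : epsR p q ≠ 0 := by
  unfold epsR; split <;> norm_num

lemma abs_epsR (p q : Fin n ⊕ Fin n) : |epsR p q| = 1 := by
  unfold epsR; split <;> norm_num

lemma epsR_emb (b b' : Bool) (a a' : Fin n) :
    epsR (emb b a) (emb b' a') = (if b && b' then (-1:ℝ) else 1) := by
  simp [epsR]

lemma cIBlock_apply (X₁ X₂ : Matrix (Fin n) (Fin n) ℝ) (p q : Fin n ⊕ Fin n) :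
    cIBlock X₁ X₂ p q
      = epsR p q * (if xor (sd p) (sd q) then X₂ else X₁) (vl p) (vl q) := by
  rcases p with a | a <;> rcases q with b | b <;>
    simp [cIBlock, Matrix.fromBlocks, epsR, sd, vl]

lemma mem_MCI_entry {M : Matrix (Fin n ⊕ Fin n) (Fin n ⊕ Fin n) ℝ} (hM : M ∈ MCI n)
    (p q : Fin n ⊕ Fin n) :
    ∃ X₁ X₂ : Matrix (Fin n) (Fin n) ℝ, X₁ᵀ = X₁ ∧ X₂ᵀ = X₂ ∧
      ∀ r s : Fin n ⊕ Fin n,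
        M r s = epsR r s * (if xor (sd r) (sd s) then X₂ else X₁) (vl r) (vl s) := by
  obtain ⟨X₁, X₂, h1, h2, rfl⟩ := hM
  exact ⟨X₁, X₂, h1, h2, fun r s => cIBlock_apply X₁ X₂ r s⟩

/-- the symmetric indicator matrix of the unordered pair {a,b} -/
def ind (a b : Fin n) : Matrix (Fin n) (Fin n) ℝ :=
  fun x y => if (x = a ∧ y = b) ∨ (x = b ∧ y = a) then 1 else 0

lemma ind_symm (a b : Fin n) : (ind a b)ᵀ = ind a b := by
  funext x y
  simp only [Matrix.transpose_apply, ind]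
  exact if_congr (by tauto) rfl rfl

@[simp] lemma ind_self (a b : Fin n) : ind a b a b = 1 := by simp [ind]

lemma ind_eq_zero {a b x y : Fin n} (h : ¬ (s(x,y) = s(a,b))) : ind a b x y = 0 := by
  exact if_neg (fun hc => h (Sym2.eq_iff.mpr hc))

lemma epsR_pm (p q : Fin n ⊕ Fin n) : epsR p q = 1 ∨ epsR p q = -1 := by
  unfold epsR; split
  · exact Or.inr rfl
  · exact Or.inl rfl

/-- witnesses: a member of MCI whose (var, pair)-component is the indicator -/
def wit (v : Bool) (a b : Fin n) : Matrix (Fin n ⊕ Fin n) (Fin n ⊕ Fin n) ℝ :=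
  if v then Matrix.fromBlocks 0 (ind a b) (ind a b) 0
  else Matrix.fromBlocks (ind a b) 0 0 (-(ind a b))

lemma wit_mem (v : Bool) (a b : Fin n) : wit v a b ∈ MCI n := by
  cases v
  · exact ⟨ind a b, 0, ind_symm a b, by simp, by simp [wit]⟩
  · exact ⟨0, ind a b, by simp, ind_symm a b, by simp [wit]⟩

lemma wit_apply (v : Bool) (a b : Fin n) (r s : Fin n ⊕ Fin n) :
    wit v a b r s
      = epsR r s * (if xor (sd r) (sd s) = v then ind a b (vl r) (vl s) else 0) := by
  obtain ⟨X₁, X₂, h1, h2, h⟩ := mem_MCI_entry (wit_mem v a b) r s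
  cases v <;>
  · rcases r with x | x <;> rcases s with y | y <;>
      simp [wit, Matrix.fromBlocks, epsR, sd, vl]

lemma nonzeroAtCI (P : (Fin n ⊕ Fin n) × (Fin n ⊕ Fin n)) : NonzeroAtCI n P := by
  refine ⟨wit (xor (sd P.1) (sd P.2)) (vl P.1) (vl P.2),
    wit_mem _ _ _, ?_⟩
  rw [wit_apply]
  simp only [if_pos rfl, ind_self]
  simpa using epsR_ne_zero P.1 P.2

lemma simCI_iff_key (P Q : (Fin n ⊕ Fin n) × (Fin n ⊕ Fin n)) :
    simCI n P Q ↔ key P.1 P.2 = key Q.1 Q.2 := by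
  constructor
  · rintro ⟨-, -, h⟩
    by_contra hk
    have hz : wit (xor (sd P.1) (sd P.2)) (vl P.1) (vl P.2) Q.1 Q.2 = 0 := by
      rw [wit_apply]
      by_cases hv : xor (sd Q.1) (sd Q.2) = xor (sd P.1) (sd P.2)
      · rw [if_pos hv]
        have hp : ¬ (s(vl Q.1, vl Q.2) = s(vl P.1, vl P.2)) := by
          intro hs
          exact hk (by simp [key, hv.symm, hs.symm])
        rw [ind_eq_zero hp, mul_zero]
      · rw [if_neg hv, mul_zero]
    have hnz : wit (xor (sd P.1) (sd P.2)) (vl P.1) (vl P.2) P.1 P.2 ≠ 0 := by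
      rw [wit_apply]
      simp only [if_pos rfl, ind_self]
      simpa using epsR_ne_zero P.1 P.2
    rcases h with h | h
    · exact hnz ((h _ (wit_mem _ _ _)).symm.trans hz)
    · exact hnz (neg_eq_zero.mp ((h _ (wit_mem _ _ _)).symm.trans hz))
  · intro hk
    refine ⟨nonzeroAtCI P, nonzeroAtCI Q, ?_⟩
    have hv : xor (sd Q.1) (sd Q.2) = xor (sd P.1) (sd P.2) := by
      have := congrArg Prod.fst hk; simpa [key] using this.symm
    have hs : s(vl Q.1, vl Q.2) = s(vl P.1, vl P.2) := by
      have := congrArg Prod.snd hk; simpa [key] using this.symm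
    have key_val : ∀ M ∈ MCI n, M Q.1 Q.2 = (epsR Q.1 Q.2 * epsR P.1 P.2) * M P.1 P.2 := by
      intro M hM
      obtain ⟨X₁, X₂, h1, h2, hent⟩ := mem_MCI_entry hM P.1 P.2
      rw [hent, hent, hv]
      have hXsym : ∀ (Y : Matrix (Fin n) (Fin n) ℝ), Yᵀ = Y →
          Y (vl Q.1) (vl Q.2) = Y (vl P.1) (vl P.2) := by
        intro Y hY
        rcases Sym2.eq_iff.mp hs with ⟨e1, e2⟩ | ⟨e1, e2⟩
        · rw [e1, e2]
        · rw [e1, e2, ← Matrix.transpose_apply Y, hY]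
      have : (if xor (sd P.1) (sd P.2) then X₂ else X₁) (vl Q.1) (vl Q.2)
          = (if xor (sd P.1) (sd P.2) then X₂ else X₁) (vl P.1) (vl P.2) := by
        split
        · exact hXsym X₂ h2
        · exact hXsym X₁ h1
      rw [this]
      have hee : epsR P.1 P.2 * epsR P.1 P.2 = 1 := by
        unfold epsR; split <;> norm_num
      have hrw : (epsR Q.1 Q.2 * epsR P.1 P.2) *
          (epsR P.1 P.2 * (if xor (sd P.1) (sd P.2) then X₂ else X₁) (vl P.1) (vl P.2))
          = (epsR P.1 P.2 * epsR P.1 P.2) *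
            (epsR Q.1 Q.2 * (if xor (sd P.1) (sd P.2) then X₂ else X₁) (vl P.1) (vl P.2)) := by
        ring
      rw [hrw, hee, one_mul]
    by_cases hsgn : epsR Q.1 Q.2 * epsR P.1 P.2 = 1
    · left; intro M hM; rw [key_val M hM, hsgn, one_mul]
    · right; intro M hM
      have hsgn' : epsR Q.1 Q.2 * epsR P.1 P.2 = -1 := by
        rcases epsR_pm Q.1 Q.2 with h1 | h1 <;> rcases epsR_pm P.1 P.2 with h2 | h2 <;>
          rw [h1, h2] at hsgn ⊢ <;> norm_num at hsgn <;> norm_num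
      rw [key_val M hM, hsgn']; ring

end CIaux

section Part2
namespace CIaux
variable {n : ℕ}

lemma sgood_iff {m : ℕ} [NeZero m] {g : Fin m → Fin m} (hgb : Function.Bijective g)
    (P : Fin 2 → Fin m → ((Fin n ⊕ Fin n) × (Fin n ⊕ Fin n))) :
    SGoodCI n m g P ↔
      IsConsistent P ∧
      (∀ l, key (P 1 (g l)).1 (P 1 (g l)).2 = key (P 0 l).1 (P 0 l).2) ∧
      Function.Injective (fun l => key (P 0 l).1 (P 0 l).2) := by
  have h01 : (0 : Fin 2) ≠ 1 := by decide
  constructor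
  · rintro ⟨h1, h2, h3⟩
    refine ⟨h1, ?_, ?_⟩
    · intro l
      exact ((simCI_iff_key _ _).mp
        ((h3 0 l 1 (g l)).mpr (Or.inr (Or.inl ⟨rfl, rfl, rfl⟩)))).symm
    · intro l l' h
      have := (h3 0 l 0 l').mp ((simCI_iff_key (P 0 l) (P 0 l')).mpr h)
      rcases this with ⟨-, h⟩ | ⟨-, h, -⟩ | ⟨h, -⟩
      · exact h
      · exact absurd h h01
      · exact absurd h h01
  · rintro ⟨h1, hk, hinj⟩
    set e := Equiv.ofBijective g hgb with he
    have hge : ∀ l, g l = e l := fun l => rfl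
    set K : Fin m → Bool × Sym2 (Fin n) := fun l => key (P 0 l).1 (P 0 l).2 with hKdef
    have hK1 : ∀ j, key (P 1 j).1 (P 1 j).2 = K (e.symm j) := by
      intro j
      have := hk (e.symm j)
      rwa [hge, e.apply_symm_apply] at this
    set idx : Fin 2 → Fin m → Fin m := fun i l => if i = 0 then l else e.symm l with hidx
    have hkey : ∀ i l, key (P i l).1 (P i l).2 = K (idx i l) := by
      intro i l
      rcases (by decide : ∀ i : Fin 2, i = 0 ∨ i = 1) i with rfl | rfl
      · simp [hidx, hKdef]
      · simpa [hidx] using hK1 l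
    refine ⟨h1, fun i l => nonzeroAtCI _, ?_⟩
    intro i l i' l'
    rw [simCI_iff_key, hkey, hkey]
    have hKinj : Function.Injective K := hinj
    have hiff : K (idx i l) = K (idx i' l') ↔ idx i l = idx i' l' :=
      ⟨fun h => hKinj h, fun h => by rw [h]⟩
    rw [hiff]
    have hI0 : ∀ l₀ : Fin m, idx 0 l₀ = l₀ := fun _ => if_pos rfl
    have hI1 : ∀ l₀ : Fin m, idx 1 l₀ = e.symm l₀ :=
      fun _ => if_neg (fun h => h01 h.symm)
    rcases (by decide : ∀ i : Fin 2, i = 0 ∨ i = 1) i with rfl | rfl <;>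
      rcases (by decide : ∀ i : Fin 2, i = 0 ∨ i = 1) i' with rfl | rfl
    · rw [hI0, hI0]
      constructor
      · intro h; exact Or.inl ⟨rfl, h⟩
      · rintro (⟨-, h⟩ | ⟨-, h, -⟩ | ⟨h, -⟩)
        · exact h
        · exact absurd h h01
        · exact absurd h h01
    · rw [hI0, hI1]
      have hmain : l = e.symm l' ↔ l' = g l := by
        rw [hge]; exact (Equiv.eq_symm_apply e).trans eq_comm
      constructor
      · intro h; exact Or.inr (Or.inl ⟨rfl, rfl, hmain.mp h⟩)
      · rintro (⟨h, -⟩ | ⟨-, -, h⟩ | ⟨-, h, -⟩)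
        · exact absurd h h01
        · exact hmain.mpr h
        · exact absurd h (fun hh => h01 hh.symm)
    · rw [hI1, hI0]
      have hmain : e.symm l = l' ↔ l = g l' := by
        rw [hge]; exact (Equiv.symm_apply_eq e).trans (by rfl)
      constructor
      · intro h; exact Or.inr (Or.inr ⟨rfl, rfl, hmain.mp h⟩)
      · rintro (⟨h, -⟩ | ⟨h, -⟩ | ⟨-, -, h⟩)
        · exact absurd h (fun hh => h01 hh.symm)
        · exact absurd h (fun hh => h01 hh.symm)
        · exact hmain.mpr h
    · rw [hI1, hI1]
      constructor
      · intro h; exact Or.inl ⟨rfl, e.symm.injective h⟩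
      · rintro (⟨-, h⟩ | ⟨h, -⟩ | ⟨-, h, -⟩)
        · rw [h]
        · exact absurd h (fun hh => h01 hh.symm)
        · exact absurd h (fun hh => h01 hh.symm)
end CIaux
end Part2

section Part3
namespace CIaux
open MeasureTheory
variable {n : ℕ}

lemma int_pair {Ω : Type*} [MeasurableSpace Ω] (μ : Measure Ω) (σ : ℝ)
    (X : Fin 2 → Ω → Matrix (Fin n) (Fin n) ℝ)
    (hsymm : ∀ i ω a b, X i ω b a = X i ω a b)
    (hvar : ∀ i (a b : Fin n), ∫ ω, |X i ω a b| ^ 2 ∂μ = σ ^ 2)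
    (p q r s : Fin n ⊕ Fin n) (hkey : key p q = key r s) :
    ∫ ω, cIBlock (X 0 ω) (X 1 ω) p q * cIBlock (X 0 ω) (X 1 ω) r s ∂μ
      = (epsR p q * epsR r s) * σ ^ 2 := by
  have hv : xor (sd r) (sd s) = xor (sd p) (sd q) := by
    have := congrArg Prod.fst hkey; simpa [key] using this.symm
  have hs2 : s(vl r, vl s) = s(vl p, vl q) := by
    have := congrArg Prod.snd hkey; simpa [key] using this.symm
  set i₀ : Fin 2 := bif xor (sd p) (sd q) then 1 else 0 with hi₀
  have hfun : (fun ω => cIBlock (X 0 ω) (X 1 ω) p q * cIBlock (X 0 ω) (X 1 ω) r s)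
      = fun ω => (epsR p q * epsR r s) * (X i₀ ω (vl p) (vl q)) ^ 2 := by
    funext ω
    rw [cIBlock_apply, cIBlock_apply, hv]
    have hentry : (if xor (sd p) (sd q) then X 1 ω else X 0 ω) (vl r) (vl s)
        = (if xor (sd p) (sd q) then X 1 ω else X 0 ω) (vl p) (vl q) := by
      rcases Sym2.eq_iff.mp hs2 with ⟨e1, e2⟩ | ⟨e1, e2⟩
      · rw [e1, e2]
      · rw [e1, e2]; split <;> apply hsymm
    rw [hentry]
    have hif : (if xor (sd p) (sd q) then X 1 ω else X 0 ω) = X i₀ ω := by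
      rw [hi₀]; cases xor (sd p) (sd q) <;> simp
    rw [hif]; ring
  rw [hfun, MeasureTheory.integral_const_mul]
  have := hvar i₀ (vl p) (vl q)
  simp only [sq_abs] at this
  rw [this]

/-- the elementary ±1 weights on Bool -/
def fB (x y : Bool) : ℝ := if x && y then -1 else 1
def eB (x : Bool) : ℝ := if x then -1 else 1

lemma fB_comm (x y : Bool) : fB x y = fB y x := by cases x <;> cases y <;> rfl
lemma fB_sq (x y : Bool) : fB x y * fB x y = 1 := by cases x <;> cases y <;> norm_num [fB]
lemma fB_flip (x y : Bool) : fB x y * fB (!x) (!y) = -(eB x * eB y) := by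
  cases x <;> cases y <;> norm_num [fB, eB]
lemma eB_sq (x : Bool) : eB x * eB x = 1 := by cases x <;> norm_num [eB]

variable {m : ℕ} [NeZero m]

lemma prod_shift (F : Fin m → ℝ) : (∏ l : Fin m, F (l + 1)) = ∏ l : Fin m, F l :=
  Equiv.prod_comp (Equiv.addRight (1 : Fin m)) F

/-- the total sign for given side sequence `s` and flip `c` -/
lemma prod_fB_pair (s : Fin m → Bool) (c : Bool) :
    (∏ l : Fin m, fB (s l) (s (l + 1)) * fB (xor (s l) c) (xor (s (l + 1)) c))
      = if c then (-1 : ℝ) ^ m else 1 := by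
  cases c
  · simp only [Bool.xor_false]
    rw [Finset.prod_congr rfl (fun l _ => fB_sq (s l) (s (l+1))), Finset.prod_const_one]
    simp
  · simp only [Bool.xor_true, if_pos rfl]
    have h1 : ∀ l : Fin m, fB (s l) (s (l + 1)) * fB (!(s l)) (!(s (l + 1)))
        = (-1) * (eB (s l) * eB (s (l + 1))) := by
      intro l; rw [fB_flip]; ring
    rw [Finset.prod_congr rfl (fun l _ => h1 l)]
    rw [Finset.prod_mul_distrib, Finset.prod_const, Finset.card_univ, Fintype.card_fin]
    rw [Finset.prod_mul_distrib, prod_shift (fun l => eB (s l))]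
    rw [← Finset.prod_mul_distrib, Finset.prod_congr rfl (fun l _ => eB_sq (s l)),
      Finset.prod_const_one, mul_one]
    simp

/-- reindexing a cyclic-edge product along `sE`, using the dihedral edge property -/
lemma prod_edge_reindex (gE sE : Equiv.Perm (Fin m))
    (hprop : ∀ j, (sE j = gE.symm j ∧ sE (j + 1) = gE.symm j + 1) ∨
      (sE j = gE.symm j + 1 ∧ sE (j + 1) = gE.symm j))
    (x : Fin m → Bool) :
    (∏ j : Fin m, fB (x (sE j)) (x (sE (j + 1)))) = ∏ j : Fin m, fB (x j) (x (j + 1)) := by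
  have h1 : ∀ j : Fin m, fB (x (sE j)) (x (sE (j + 1)))
      = fB (x (gE.symm j)) (x (gE.symm j + 1)) := by
    intro j
    rcases hprop j with ⟨e1, e2⟩ | ⟨e1, e2⟩
    · rw [e1, e2]
    · rw [e1, e2, fB_comm]
  rw [Finset.prod_congr rfl (fun j _ => h1 j)]
  exact Equiv.prod_comp gE.symm (fun k => fB (x k) (x (k + 1)))

end CIaux
end Part3

section Part4
namespace CIaux
variable {n m : ℕ} [NeZero m]

open Fin.CommRing in
lemma fin_one_ne_zero' (hm : 3 ≤ m) : (1 : Fin m) ≠ 0 := by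
  intro h
  rw [show (1 : Fin m) = ((1 : ℕ) : Fin m) by norm_cast, Fin.natCast_eq_zero] at h
  have := Nat.le_of_dvd one_pos h
  omega

open Fin.CommRing in
lemma fin_two_ne_zero' (hm : 3 ≤ m) : (1 + 1 : Fin m) ≠ 0 := by
  intro h
  rw [show (1 + 1 : Fin m) = ((2 : ℕ) : Fin m) by push_cast; ring, Fin.natCast_eq_zero] at h
  have := Nat.le_of_dvd two_pos h
  omega

lemma fin_succ_ne (hm : 3 ≤ m) (j : Fin m) : j + 1 ≠ j :=
  fun h => fin_one_ne_zero' hm (left_eq_add.mp h.symm)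

lemma fin_succ_succ_ne (hm : 3 ≤ m) (j : Fin m) : j + 1 + 1 ≠ j := by
  intro h
  rw [add_assoc] at h
  exact fin_two_ne_zero' hm (left_eq_add.mp h.symm)

lemma xor_xor_cancel (x y c : Bool) : xor (xor x c) (xor y c) = xor x y := by
  cases x <;> cases y <;> cases c <;> rfl

lemma bool_aux1 (c y : Bool) : (c != (y ^^ c)) = y := by cases c <;> cases y <;> rfl

lemma xor_solve {x y c : Bool} (h : xor x y = c) : x = xor y c := by
  cases x <;> cases y <;> cases c <;> simp_all

lemma xor_swap_solve {x1 x2 x3 x4 : Bool} (h : xor x1 x2 = xor x3 x4) :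
    xor x2 x4 = xor x1 x3 := by
  cases x1 <;> cases x2 <;> cases x3 <;> cases x4 <;> simp_all

section withPerm
variable (g : Fin m → Fin m) (gE sE : Equiv.Perm (Fin m))

lemma edge_cond
    (hgE : ∀ l, gE l = g l)
    (hprop : ∀ j, (sE j = gE.symm j ∧ sE (j + 1) = gE.symm j + 1) ∨
      (sE j = gE.symm j + 1 ∧ sE (j + 1) = gE.symm j))
    (P : Fin 2 → Fin m → ((Fin n ⊕ Fin n) × (Fin n ⊕ Fin n)))
    (hcons : IsConsistent P)
    (hk : ∀ l, key (P 1 (g l)).1 (P 1 (g l)).2 = key (P 0 l).1 (P 0 l).2) :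
    ∀ j, xor (sd (P 1 j).1) (sd (P 1 (j + 1)).1)
          = xor (sd (P 0 (sE j)).1) (sd (P 0 (sE (j + 1))).1) ∧
        s(vl (P 1 j).1, vl (P 1 (j + 1)).1)
          = s(vl (P 0 (sE j)).1, vl (P 0 (sE (j + 1))).1) := by
  intro j
  have hgj : g (gE.symm j) = j := by rw [← hgE]; exact gE.apply_symm_apply j
  have hk' := hk (gE.symm j)
  rw [hgj] at hk'
  have hkey1 : key (P 1 j).1 (P 1 j).2
      = (xor (sd (P 1 j).1) (sd (P 1 (j + 1)).1),
          s(vl (P 1 j).1, vl (P 1 (j + 1)).1)) := by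
    rw [key, hcons 1 j]
  have hkey0 : key (P 0 (gE.symm j)).1 (P 0 (gE.symm j)).2
      = (xor (sd (P 0 (gE.symm j)).1) (sd (P 0 (gE.symm j + 1)).1),
          s(vl (P 0 (gE.symm j)).1, vl (P 0 (gE.symm j + 1)).1)) := by
    rw [key, hcons 0 (gE.symm j)]
  rw [hkey1, hkey0] at hk'
  have h1 := congrArg Prod.fst hk'
  have h2 := congrArg Prod.snd hk'
  simp only at h1 h2
  rcases hprop j with ⟨e1, e2⟩ | ⟨e1, e2⟩
  · rw [e1, e2]; exact ⟨h1, h2⟩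
  · rw [e1, e2]
    exact ⟨h1.trans (Bool.xor_comm _ _), h2.trans (Sym2.eq_swap)⟩

open Fin.CommRing in
lemma forced
    (hgE : ∀ l, gE l = g l)
    (hprop : ∀ j, (sE j = gE.symm j ∧ sE (j + 1) = gE.symm j + 1) ∨
      (sE j = gE.symm j + 1 ∧ sE (j + 1) = gE.symm j))
    (hm : 3 ≤ m)
    (P : Fin 2 → Fin m → ((Fin n ⊕ Fin n) × (Fin n ⊕ Fin n)))
    (hcons : IsConsistent P)
    (hk : ∀ l, key (P 1 (g l)).1 (P 1 (g l)).2 = key (P 0 l).1 (P 0 l).2)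
    (hainj : Function.Injective (fun l => vl (P 0 l).1)) :
    ∀ j, vl (P 1 j).1 = vl (P 0 (sE j)).1 ∧
      sd (P 1 j).1 = xor (sd (P 0 (sE j)).1)
        (xor (sd (P 1 0).1) (sd (P 0 (sE 0)).1)) := by
  have hedge := edge_cond g gE sE hgE hprop P hcons hk
  have hbj : ∀ j, vl (P 1 j).1 = vl (P 0 (sE j)).1 := by
    intro j
    rcases Sym2.eq_iff.mp (hedge j).2 with ⟨h1, -⟩ | ⟨h1, h2⟩
    · exact h1
    exfalso
    have hainj' : ∀ {u v : Fin m}, vl (P 0 u).1 = vl (P 0 v).1 → u = v :=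
      fun h => hainj h
    rcases Sym2.eq_iff.mp (hedge (j + 1)).2 with ⟨h3, -⟩ | ⟨h3, -⟩
    · exact fin_succ_ne hm j (sE.injective (hainj' (h2.symm.trans h3))).symm
    · exact fin_succ_succ_ne hm j (sE.injective (hainj' (h2.symm.trans h3))).symm
  have hstep : ∀ j : Fin m, xor (sd (P 1 (j + 1)).1) (sd (P 0 (sE (j + 1))).1)
      = xor (sd (P 1 j).1) (sd (P 0 (sE j)).1) :=
    fun j => xor_swap_solve (hedge j).1
  have hconst : ∀ j : Fin m, xor (sd (P 1 j).1) (sd (P 0 (sE j)).1)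
      = xor (sd (P 1 0).1) (sd (P 0 (sE 0)).1) := by
    have hnat : ∀ k : ℕ, xor (sd (P 1 ((k : Fin m))).1) (sd (P 0 (sE (k : Fin m))).1)
        = xor (sd (P 1 0).1) (sd (P 0 (sE 0)).1) := by
      intro k
      induction k with
      | zero => norm_num
      | succ k ih =>
        have hc : ((k + 1 : ℕ) : Fin m) = ((k : ℕ) : Fin m) + 1 := by push_cast; ring
        rw [hc, hstep, ih]
    intro j
    have := hnat j.val
    rwa [Fin.cast_val_eq_self] at this
  intro j
  refine ⟨hbj j, ?_⟩
  exact xor_solve (hconst j)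

/-- the multi-index built from side data `s`, flip `c`, value data `a` -/
def phi (s : Fin m → Bool) (c : Bool) (a : Fin m → Fin n) :
    Fin 2 → Fin m → ((Fin n ⊕ Fin n) × (Fin n ⊕ Fin n)) :=
  fun i l =>
    (if i = 0 then emb (s l) (a l) else emb (xor (s (sE l)) c) (a (sE l)),
     if i = 0 then emb (s (l + 1)) (a (l + 1)) else emb (xor (s (sE (l + 1))) c) (a (sE (l + 1))))

@[simp] lemma phi_fst0 (s : Fin m → Bool) (c : Bool) (a : Fin m → Fin n) (l : Fin m) :
    (phi sE s c a 0 l).1 = emb (s l) (a l) := by simp [phi]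

@[simp] lemma phi_snd0 (s : Fin m → Bool) (c : Bool) (a : Fin m → Fin n) (l : Fin m) :
    (phi sE s c a 0 l).2 = emb (s (l + 1)) (a (l + 1)) := by simp [phi]

@[simp] lemma phi_fst1 (s : Fin m → Bool) (c : Bool) (a : Fin m → Fin n) (l : Fin m) :
    (phi sE s c a 1 l).1 = emb (xor (s (sE l)) c) (a (sE l)) := by simp [phi]

@[simp] lemma phi_snd1 (s : Fin m → Bool) (c : Bool) (a : Fin m → Fin n) (l : Fin m) :
    (phi sE s c a 1 l).2 = emb (xor (s (sE (l + 1))) c) (a (sE (l + 1))) := by simp [phi]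

lemma phi_consistent (s : Fin m → Bool) (c : Bool) (a : Fin m → Fin n) :
    IsConsistent (phi sE s c a) := by
  intro i l; rfl

lemma key_phi0 (s : Fin m → Bool) (c : Bool) (a : Fin m → Fin n) (l : Fin m) :
    key (phi sE s c a 0 l).1 (phi sE s c a 0 l).2
      = (xor (s l) (s (l + 1)), s(a l, a (l + 1))) := by
  simp [phi, key]

lemma key_phi1 (s : Fin m → Bool) (c : Bool) (a : Fin m → Fin n) (j : Fin m) :
    key (phi sE s c a 1 j).1 (phi sE s c a 1 j).2
      = (xor (s (sE j)) (s (sE (j + 1))), s(a (sE j), a (sE (j + 1)))) := by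
  simp [phi, key, xor_xor_cancel, bool_aux1]

lemma phi_keymatch
    (hgE : ∀ l, gE l = g l)
    (hprop : ∀ j, (sE j = gE.symm j ∧ sE (j + 1) = gE.symm j + 1) ∨
      (sE j = gE.symm j + 1 ∧ sE (j + 1) = gE.symm j))
    (s : Fin m → Bool) (c : Bool) (a : Fin m → Fin n) (l : Fin m) :
    key (phi sE s c a 1 (g l)).1 (phi sE s c a 1 (g l)).2
      = key (phi sE s c a 0 l).1 (phi sE s c a 0 l).2 := by
  rw [key_phi1, key_phi0]
  have hj : gE.symm (g l) = l := by rw [← hgE]; exact gE.symm_apply_apply l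
  rcases hprop (g l) with ⟨e1, e2⟩ | ⟨e1, e2⟩ <;> rw [hj] at e1 e2 <;> rw [e1, e2]
  · rw [Bool.xor_comm, Sym2.eq_swap]

lemma phi_keyinj (hm : 3 ≤ m) (s : Fin m → Bool) (c : Bool) (a : Fin m → Fin n)
    (hainj : Function.Injective a) :
    Function.Injective (fun l => key (phi sE s c a 0 l).1 (phi sE s c a 0 l).2) := by
  intro l l' h
  simp only [key_phi0] at h
  have h2 := congrArg Prod.snd h
  simp only at h2
  rcases Sym2.eq_iff.mp h2 with ⟨e1, -⟩ | ⟨e1, e2⟩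
  · exact hainj e1
  · exfalso
    have hl : l = l' + 1 := hainj e1
    have hl' : l' = l + 1 := (hainj e2).symm
    rw [hl'] at hl
    exact fin_succ_succ_ne hm l hl.symm

end withPerm
end CIaux
end Part4

section Part5
namespace CIaux
open Filter Finset

lemma count_noninj (n m : ℕ) :
    (Finset.univ.filter fun a : Fin m → Fin n => ¬ Function.Injective a).card
      ≤ m * m * n ^ (m - 1) := by
  classical
  have hsub : (Finset.univ.filter fun a : Fin m → Fin n => ¬ Function.Injective a) ⊆
      (Finset.univ.filter fun p : Fin m × Fin m => p.1 ≠ p.2).biUnion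
        (fun p => Finset.univ.filter fun a : Fin m → Fin n => a p.1 = a p.2) := by
    intro a ha
    simp only [Finset.mem_filter, Finset.mem_univ, true_and] at ha
    obtain ⟨x, y, hxy, hne⟩ := Function.not_injective_iff.mp ha
    exact Finset.mem_biUnion.mpr ⟨(x, y), by simp [hne], by simp [hxy]⟩
  refine le_trans (Finset.card_le_card hsub) (le_trans Finset.card_biUnion_le ?_)
  have hbound : ∀ p ∈ (Finset.univ.filter fun p : Fin m × Fin m => p.1 ≠ p.2),
      (Finset.univ.filter fun a : Fin m → Fin n => a p.1 = a p.2).card ≤ n ^ (m - 1) := by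
    rintro ⟨l, l'⟩ hp
    simp only [Finset.mem_filter, Finset.mem_univ, true_and] at hp
    have hsubcard : Fintype.card {k : Fin m // k ≠ l'} = m - 1 := by
      have := Fintype.card_subtype_compl (fun k : Fin m => k = l')
      rw [Fintype.card_subtype_eq, Fintype.card_fin] at this
      exact this
    have hcard : (Finset.univ : Finset ({k : Fin m // k ≠ l'} → Fin n)).card = n ^ (m - 1) := by
      rw [Finset.card_univ, Fintype.card_fun, Fintype.card_fin, hsubcard]
    rw [← hcard]
    apply Finset.card_le_card_of_injOn
      (fun a => (fun k : {k : Fin m // k ≠ l'} => a k.1))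
      (fun a _ => Finset.mem_univ _)
    intro a ha a' ha' hfa
    simp only [Finset.coe_filter, Set.mem_setOf_eq, Finset.mem_univ, true_and] at ha ha'
    funext k
    by_cases hk : k = l'
    · subst hk
      have h1 : a l = a' l := congrFun hfa ⟨l, hp⟩
      rw [← ha, ← ha']
      exact h1
    · exact congrFun hfa ⟨k, hk⟩
  calc ∑ p ∈ (Finset.univ.filter fun p : Fin m × Fin m => p.1 ≠ p.2),
        (Finset.univ.filter fun a : Fin m → Fin n => a p.1 = a p.2).card
      ≤ (Finset.univ.filter fun p : Fin m × Fin m => p.1 ≠ p.2).card * n ^ (m - 1) := by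
        simpa [smul_eq_mul] using
          Finset.sum_le_card_nsmul _ _ (n ^ (m - 1)) hbound
    _ ≤ m * m * n ^ (m - 1) := by
        apply Nat.mul_le_mul_right
        calc (Finset.univ.filter fun p : Fin m × Fin m => p.1 ≠ p.2).card
            ≤ (Finset.univ : Finset (Fin m × Fin m)).card := Finset.card_filter_le _ _
          _ = m * m := by simp [Finset.card_univ]
  
lemma desc_tendsto (m : ℕ) :
    Tendsto (fun n : ℕ => (n.descFactorial m : ℝ) * ((n : ℝ) ^ m)⁻¹) atTop (nhds 1) := by
  have h1 : Tendsto (fun n : ℕ => ∏ i ∈ Finset.range m, (1 - (i : ℝ) / n)) atTop (nhds 1) := by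
    have h2 := tendsto_finset_prod (Finset.range m)
      (f := fun (i : ℕ) (n : ℕ) => 1 - (i : ℝ) / n) (x := atTop)
      (a := fun _ => (1 : ℝ)) ?_
    · simpa using h2
    · intro i _
      have hdiv : Tendsto (fun n : ℕ => (i : ℝ) / n) atTop (nhds 0) := by
        have := tendsto_one_div_atTop_nhds_zero_nat.const_mul (i : ℝ)
        simpa [div_eq_mul_inv] using this
      have := (tendsto_const_nhds (x := (1 : ℝ)) (f := atTop)).sub hdiv
      simpa using this
  refine h1.congr' ?_
  filter_upwards [eventually_ge_atTop (max m 1)] with n hn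
  have hmn : m ≤ n := le_trans (le_max_left _ _) hn
  have hn1 : 1 ≤ n := le_trans (le_max_right _ _) hn
  have hn0 : (n : ℝ) ≠ 0 := by positivity
  rw [Nat.descFactorial_eq_prod_range, Nat.cast_prod]
  have hterm : ∀ i ∈ Finset.range m, (1 : ℝ) - (i : ℝ) / n
      = ((n - i : ℕ) : ℝ) * (n : ℝ)⁻¹ := by
    intro i hi
    have hile : i ≤ n := le_trans (le_of_lt (Finset.mem_range.mp hi)) hmn
    rw [Nat.cast_sub hile]
    field_simp
  rw [Finset.prod_congr rfl hterm, Finset.prod_mul_distrib, Finset.prod_const,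
    Finset.card_range, ← inv_pow]

end CIaux
end Part5

section Master
namespace CIaux
open Filter MeasureTheory Finset

lemma xor_left_cancel' {x c c' : Bool} (h : xor x c = xor x c') : c = c' := by
  cases x <;> cases c <;> cases c' <;> simp_all

lemma master {Ω : Type*} [MeasurableSpace Ω] (μ : Measure Ω)
    (σ : ℝ)
    (X : (n : ℕ) → Fin 2 → Ω → Matrix (Fin n) (Fin n) ℝ)
    (hsymm : ∀ n i ω a b, X n i ω b a = X n i ω a b)
    (hvar : ∀ n i (a b : Fin n), ∫ ω, |X n i ω a b| ^ 2 ∂μ = σ ^ 2)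
    (m : ℕ) [NeZero m] (hm : 3 ≤ m)
    (g : Fin m → Fin m) (gE sE : Equiv.Perm (Fin m))
    (hgE : ∀ l, gE l = g l)
    (hprop : ∀ j, (sE j = gE.symm j ∧ sE (j + 1) = gE.symm j + 1) ∨
      (sE j = gE.symm j + 1 ∧ sE (j + 1) = gE.symm j)) :
    Tendsto (fun n : ℕ =>
      ((n : ℝ) ^ m)⁻¹ *
        ∑ᶠ P ∈ {P : Fin 2 → Fin m → ((Fin n ⊕ Fin n) × (Fin n ⊕ Fin n)) |
            SGoodCI n m g P},
          ∏ l : Fin m, ∫ ω, cIBlock (X n 0 ω) (X n 1 ω) (P 0 l).1 (P 0 l).2 *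
            cIBlock (X n 0 ω) (X n 1 ω) (P 1 (g l)).1 (P 1 (g l)).2 ∂μ)
      atTop
      (nhds (if Odd m then 0 else 2 ^ (m + 1) * σ ^ (2 * m))) := by
  classical
  have hgb : Function.Bijective g := by
    have hg' : g = ⇑gE := funext fun l => (hgE l).symm
    rw [hg']; exact gE.bijective
  set K : ℝ := (σ ^ 2) ^ m with hK
  have hK0 : 0 ≤ K := by positivity
  set cval : ℝ := (1 + (-1 : ℝ) ^ m) * 2 ^ m * K with hcval
  -- the summand
  set T : (n : ℕ) → (Fin 2 → Fin m → ((Fin n ⊕ Fin n) × (Fin n ⊕ Fin n))) → ℝ :=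
    fun n P => ∏ l : Fin m, ∫ ω, cIBlock (X n 0 ω) (X n 1 ω) (P 0 l).1 (P 0 l).2 *
      cIBlock (X n 0 ω) (X n 1 ω) (P 1 (g l)).1 (P 1 (g l)).2 ∂μ with hT
  set G : (n : ℕ) → Finset (Fin 2 → Fin m → ((Fin n ⊕ Fin n) × (Fin n ⊕ Fin n))) :=
    fun n => Finset.univ.filter (fun P => SGoodCI n m g P) with hG
  have hfins : ∀ n : ℕ,
      (∑ᶠ P ∈ {P : Fin 2 → Fin m → ((Fin n ⊕ Fin n) × (Fin n ⊕ Fin n)) |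
          SGoodCI n m g P}, T n P) = ∑ P ∈ G n, T n P := by
    intro n
    have hset : {P : Fin 2 → Fin m → ((Fin n ⊕ Fin n) × (Fin n ⊕ Fin n)) |
        SGoodCI n m g P} = ↑(G n) := by
      ext P; simp [hG]
    rw [hset, finsum_mem_coe_finset]
  -- value of a good term
  have hterm : ∀ (n : ℕ) P, SGoodCI n m g P →
      T n P = (∏ l : Fin m, epsR (P 0 l).1 (P 0 l).2 *
        epsR (P 1 (g l)).1 (P 1 (g l)).2) * K := by
    intro n P hP
    obtain ⟨hcons, hkm, -⟩ := (sgood_iff hgb P).mp hP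
    have hint : ∀ l ∈ (Finset.univ : Finset (Fin m)),
        (∫ ω, cIBlock (X n 0 ω) (X n 1 ω) (P 0 l).1 (P 0 l).2 *
          cIBlock (X n 0 ω) (X n 1 ω) (P 1 (g l)).1 (P 1 (g l)).2 ∂μ)
        = epsR (P 0 l).1 (P 0 l).2 * epsR (P 1 (g l)).1 (P 1 (g l)).2 * σ ^ 2 :=
      fun l _ => int_pair μ σ (X n) (hsymm n) (hvar n) _ _ _ _ (hkm l).symm
    have hTP : T n P = ∏ l : Fin m, (epsR (P 0 l).1 (P 0 l).2 *
        epsR (P 1 (g l)).1 (P 1 (g l)).2 * σ ^ 2) := Finset.prod_congr rfl hint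
    rw [hTP, Finset.prod_mul_distrib, Finset.prod_const, Finset.card_univ, Fintype.card_fin]
  have habs : ∀ (n : ℕ) P, SGoodCI n m g P → |T n P| ≤ K := by
    intro n P hP
    rw [hterm n P hP, abs_mul, abs_of_nonneg hK0]
    have h1 : |∏ l : Fin m, epsR (P 0 l).1 (P 0 l).2 *
        epsR (P 1 (g l)).1 (P 1 (g l)).2| = 1 := by
      rw [Finset.abs_prod]
      rw [Finset.prod_congr rfl (fun l _ => by
        rw [abs_mul, abs_epsR, abs_epsR, mul_one] : ∀ l ∈ Finset.univ, _ = (1:ℝ))]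
      exact Finset.prod_const_one
    rw [h1, one_mul]
  -- Step D : the injective part
  have hgoodphi : ∀ (n : ℕ) (s : Fin m → Bool) (c : Bool) (a : Fin m → Fin n),
      Function.Injective a → SGoodCI n m g (phi sE s c a) := by
    intro n s c a ha
    exact (sgood_iff hgb _).mpr ⟨phi_consistent sE s c a,
      fun l => phi_keymatch g gE sE hgE hprop s c a l,
      phi_keyinj sE hm s c a ha⟩
  have hA : ∀ n : ℕ,
      ∑ P ∈ (G n).filter (fun P => Function.Injective (fun l => vl (P 0 l).1)), T n P
        = cval * (n.descFactorial m : ℝ) := by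
    intro n
    have hbij : (∑ x : (Fin m → Bool) × Bool × {a : Fin m → Fin n // Function.Injective a},
          ((if x.2.1 then (-1 : ℝ) ^ m else 1) * K))
        = ∑ P ∈ (G n).filter (fun P => Function.Injective (fun l => vl (P 0 l).1)), T n P := by
      refine Finset.sum_bij (fun x _ => phi sE x.1 x.2.1 x.2.2.1) ?_ ?_ ?_ ?_
      · rintro ⟨s, c, a, ha⟩ -
        simp only [hG, Finset.mem_filter, Finset.mem_univ, true_and]
        refine ⟨hgoodphi n s c a ha, ?_⟩
        have hval : (fun l => vl (phi sE s c a 0 l).1) = a := by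
          funext l; rw [phi_fst0, vl_emb]
        show Function.Injective (fun l => vl (phi sE s c a 0 l).1)
        rw [hval]; exact ha
      · intro x hx y hy h
        obtain ⟨s, c, a, ha⟩ := x
        obtain ⟨s', c', a', ha'⟩ := y
        have hs : s = s' := by
          funext l
          have := congrArg (fun P => sd ((P (0 : Fin 2) l).1)) h
          simpa only [phi_fst0, sd_emb] using this
        have haa : a = a' := by
          funext l
          have := congrArg (fun P => vl ((P (0 : Fin 2) l).1)) h
          simpa only [phi_fst0, vl_emb] using this
        have hc : c = c' := by
          have h2 := congrArg (fun P => sd ((P (1 : Fin 2) (0 : Fin m)).1)) h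
          simp only [phi_fst1, sd_emb] at h2
          rw [hs] at h2
          exact xor_left_cancel' h2
        subst hs; subst haa; subst hc; rfl
      · intro P hP
        simp only [hG, Finset.mem_filter, Finset.mem_univ, true_and] at hP
        obtain ⟨hgood, hainjP⟩ := hP
        obtain ⟨hcons, hkm, -⟩ := (sgood_iff hgb P).mp hgood
        refine ⟨(fun l => sd (P 0 l).1, xor (sd (P 1 0).1) (sd (P 0 (sE 0)).1),
          ⟨fun l => vl (P 0 l).1, hainjP⟩), Finset.mem_univ _, ?_⟩
        have hf := forced g gE sE hgE hprop hm P hcons hkm hainjP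
        funext i l
        rcases (by decide : ∀ i : Fin 2, i = 0 ∨ i = 1) i with rfl | rfl
        · refine Prod.ext ?_ ?_
          · rw [phi_fst0, emb_sd_vl]
          · rw [phi_snd0, emb_sd_vl]
            exact (hcons 0 l).symm
        · refine Prod.ext ?_ ?_
          · rw [phi_fst1]
            show emb (xor (sd (P 0 (sE l)).1) (xor (sd (P 1 0).1) (sd (P 0 (sE 0)).1)))
              (vl (P 0 (sE l)).1) = (P 1 l).1
            rw [← (hf l).2, ← (hf l).1, emb_sd_vl]
          · rw [phi_snd1]
            show emb (xor (sd (P 0 (sE (l + 1))).1) (xor (sd (P 1 0).1) (sd (P 0 (sE 0)).1)))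
              (vl (P 0 (sE (l + 1))).1) = (P 1 l).2
            rw [← (hf (l + 1)).2, ← (hf (l + 1)).1, emb_sd_vl]
            exact (hcons 1 l).symm
      · rintro ⟨s, c, a, ha⟩ -
        rw [hterm n _ (hgoodphi n s c a ha)]
        have h0 : ∀ l, epsR (phi sE s c a 0 l).1 (phi sE s c a 0 l).2
            = fB (s l) (s (l + 1)) := fun l => by
          rw [phi_fst0, phi_snd0, epsR_emb]; rfl
        have h1 : ∀ j, epsR (phi sE s c a 1 j).1 (phi sE s c a 1 j).2
            = fB (xor (s (sE j)) c) (xor (s (sE (j + 1))) c) := fun j => by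
          rw [phi_fst1, phi_snd1, epsR_emb]; rfl
        have hsplit2 : (∏ l : Fin m, epsR (phi sE s c a 0 l).1 (phi sE s c a 0 l).2 *
              epsR (phi sE s c a 1 (g l)).1 (phi sE s c a 1 (g l)).2)
            = (∏ l : Fin m, fB (s l) (s (l + 1))) *
              ∏ l : Fin m, epsR (phi sE s c a 1 (g l)).1 (phi sE s c a 1 (g l)).2 := by
          rw [Finset.prod_mul_distrib]
          congr 1
          exact Finset.prod_congr rfl (fun l _ => h0 l)
        have hre : (∏ l : Fin m, epsR (phi sE s c a 1 (g l)).1 (phi sE s c a 1 (g l)).2)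
            = ∏ j : Fin m, epsR (phi sE s c a 1 j).1 (phi sE s c a 1 j).2 := by
          have hcomp := Equiv.prod_comp gE
            (fun j => epsR (phi sE s c a 1 j).1 (phi sE s c a 1 j).2)
          rw [← hcomp]
          exact Finset.prod_congr rfl (fun l _ => by rw [hgE l])
        have hre2 : (∏ j : Fin m, epsR (phi sE s c a 1 j).1 (phi sE s c a 1 j).2)
            = ∏ j : Fin m, fB (xor (s j) c) (xor (s (j + 1)) c) := by
          rw [Finset.prod_congr rfl (fun j _ => h1 j)]
          exact prod_edge_reindex gE sE hprop (fun k => xor (s k) c)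
        rw [hsplit2, hre, hre2, ← Finset.prod_mul_distrib, prod_fB_pair s c]
    rw [← hbij]
    have hcardA : Fintype.card {a : Fin m → Fin n // Function.Injective a}
        = n.descFactorial m := by
      rw [Fintype.card_congr (Equiv.subtypeInjectiveEquivEmbedding (Fin m) (Fin n)),
        Fintype.card_embedding_eq, Fintype.card_fin, Fintype.card_fin]
    rw [Fintype.sum_prod_type]
    have hinner : (∑ y : Bool × {a : Fin m → Fin n // Function.Injective a},
        ((if y.1 then (-1 : ℝ) ^ m else 1) * K))
        = (1 + (-1 : ℝ) ^ m) * (n.descFactorial m : ℝ) * K := by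
      rw [Fintype.sum_prod_type, Fintype.sum_bool]
      norm_num [Finset.sum_const, Finset.card_univ, hcardA, nsmul_eq_mul]
      ring
    rw [Finset.sum_congr rfl (fun s _ => hinner), Finset.sum_const, Finset.card_univ,
      Fintype.card_fun, Fintype.card_bool, Fintype.card_fin, nsmul_eq_mul, hcval]
    push_cast
    ring
  -- Step E : reconstruction of a good multi-index from discrete data
  have hrec : ∀ (n : ℕ) P, SGoodCI n m g P → ∀ j : Fin m,
      (P 1 j).1 = emb (sd (P 1 j).1)
        (if vl (P 1 j).1 = vl (P 0 (sE j)).1 then vl (P 0 (sE j)).1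
         else vl (P 0 (sE (j + 1))).1) := by
    intro n P hP j
    obtain ⟨hcons, hkm, -⟩ := (sgood_iff hgb P).mp hP
    have hedge := edge_cond g gE sE hgE hprop P hcons hkm
    by_cases hcc : vl (P 1 j).1 = vl (P 0 (sE j)).1
    · rw [if_pos hcc, ← hcc, emb_sd_vl]
    · rw [if_neg hcc]
      rcases Sym2.eq_iff.mp (hedge j).2 with ⟨h1, -⟩ | ⟨h1, -⟩
      · exact absurd h1 hcc
      · rw [← h1, emb_sd_vl]
  have hBcard : ∀ n : ℕ,
      ((G n).filter (fun P => ¬ Function.Injective (fun l => vl (P 0 l).1))).card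
        ≤ 2 ^ m * (2 ^ m * (2 ^ m * (m * m * n ^ (m - 1)))) := by
    intro n
    have h1 : ((G n).filter (fun P => ¬ Function.Injective (fun l => vl (P 0 l).1))).card
        ≤ (Finset.univ.filter
            (fun q : (Fin m → Bool) × (Fin m → Bool) × (Fin m → Bool) × (Fin m → Fin n) =>
              ¬ Function.Injective q.2.2.2)).card := by
      apply Finset.card_le_card_of_injOn
        (fun P => (fun l => sd (P 0 l).1, fun j => sd (P 1 j).1,
          fun j => decide (vl (P 1 j).1 = vl (P 0 (sE j)).1), fun l => vl (P 0 l).1))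
      · intro P hP
        simp only [Finset.mem_filter, Finset.mem_univ, true_and] at hP ⊢
        exact Finset.mem_coe.mpr (Finset.mem_filter.mpr ⟨Finset.mem_univ _, (Finset.mem_filter.mp hP).2⟩)
      · intro P hP P' hP' h
        simp only [hG, Finset.coe_filter, Set.mem_setOf_eq, Finset.mem_filter,
          Finset.mem_univ, true_and] at hP hP'
        obtain ⟨hgood, -⟩ := hP
        obtain ⟨hgood', -⟩ := hP'
        have hcons := ((sgood_iff hgb P).mp hgood).1
        have hcons' := ((sgood_iff hgb P').mp hgood').1
        have hs0 := congrArg Prod.fst h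
        have hrest := congrArg Prod.snd h
        have ht0 := congrArg Prod.fst hrest
        have hrest2 := congrArg Prod.snd hrest
        have hχ0 := congrArg Prod.fst hrest2
        have ha0 := congrArg Prod.snd hrest2
        simp only at hs0 ht0 hχ0 ha0
        have hs : ∀ l, sd (P 0 l).1 = sd (P' 0 l).1 := fun l => congrFun hs0 l
        have ht2 : ∀ j, sd (P 1 j).1 = sd (P' 1 j).1 := fun j => congrFun ht0 j
        have ha : ∀ l, vl (P 0 l).1 = vl (P' 0 l).1 := fun l => congrFun ha0 l
        have hχ : ∀ j, (vl (P 1 j).1 = vl (P 0 (sE j)).1)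
            ↔ (vl (P' 1 j).1 = vl (P' 0 (sE j)).1) :=
          fun j => decide_eq_decide.mp (congrFun hχ0 j)
        have hrow0 : ∀ l, (P 0 l).1 = (P' 0 l).1 := by
          intro l
          rw [← emb_sd_vl ((P 0 l).1), ← emb_sd_vl ((P' 0 l).1), hs, ha]
        have hrow1 : ∀ j, (P 1 j).1 = (P' 1 j).1 := by
          intro j
          rw [hrec n P hgood j, hrec n P' hgood' j, ht2 j]
          refine congrArg (emb _) ?_
          by_cases hc : vl (P 1 j).1 = vl (P 0 (sE j)).1
          · rw [if_pos hc, if_pos ((hχ j).mp hc), ha]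
          · rw [if_neg hc, if_neg (fun hc' => hc ((hχ j).mpr hc')), ha]
        funext i l
        rcases (by decide : ∀ i : Fin 2, i = 0 ∨ i = 1) i with rfl | rfl
        · exact Prod.ext (hrow0 l) (by rw [hcons 0 l, hcons' 0 l]; exact hrow0 (l + 1))
        · exact Prod.ext (hrow1 l) (by rw [hcons 1 l, hcons' 1 l]; exact hrow1 (l + 1))
    refine le_trans h1 ?_
    have h2 : (Finset.univ.filter
          (fun q : (Fin m → Bool) × (Fin m → Bool) × (Fin m → Bool) × (Fin m → Fin n) =>
            ¬ Function.Injective q.2.2.2))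
        ⊆ Finset.univ ×ˢ (Finset.univ ×ˢ (Finset.univ ×ˢ
            (Finset.univ.filter fun a : Fin m → Fin n => ¬ Function.Injective a))) := by
      intro q hq
      simp only [Finset.mem_filter, Finset.mem_univ, true_and] at hq
      simp only [Finset.mem_product, Finset.mem_filter, Finset.mem_univ, true_and]
      exact hq
    refine le_trans (Finset.card_le_card h2) ?_
    simp only [Finset.card_product, Finset.card_univ, Fintype.card_fun,
      Fintype.card_bool, Fintype.card_fin]
    have := count_noninj n m
    exact Nat.mul_le_mul_left _ (Nat.mul_le_mul_left _ (Nat.mul_le_mul_left _ this))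
  -- Step F : assembly
  have hBsum : ∀ n : ℕ,
      |∑ P ∈ (G n).filter (fun P => ¬ Function.Injective (fun l => vl (P 0 l).1)), T n P|
        ≤ ((2 ^ m * (2 ^ m * (2 ^ m * (m * m * n ^ (m - 1)))) : ℕ) : ℝ) * K := by
    intro n
    refine le_trans (Finset.abs_sum_le_sum_abs _ _) ?_
    have h1 : ∀ P ∈ (G n).filter (fun P => ¬ Function.Injective (fun l => vl (P 0 l).1)),
        |T n P| ≤ K := by
      intro P hP
      simp only [hG, Finset.mem_filter, Finset.mem_univ, true_and] at hP
      exact habs n P hP.1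
    refine le_trans (Finset.sum_le_card_nsmul _ _ K h1) ?_
    rw [nsmul_eq_mul]
    exact mul_le_mul_of_nonneg_right (Nat.cast_le.mpr (hBcard n)) hK0
  have hexpr : ∀ n : ℕ,
      ((n : ℝ) ^ m)⁻¹ *
        (∑ᶠ P ∈ {P : Fin 2 → Fin m → ((Fin n ⊕ Fin n) × (Fin n ⊕ Fin n)) |
            SGoodCI n m g P}, T n P)
      = cval * ((n.descFactorial m : ℝ) * ((n : ℝ) ^ m)⁻¹)
        + ((n : ℝ) ^ m)⁻¹ *
          (∑ P ∈ (G n).filter (fun P => ¬ Function.Injective (fun l => vl (P 0 l).1)), T n P) := by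
    intro n
    have hsplit : (∑ P ∈ G n, T n P)
        = (∑ P ∈ (G n).filter (fun P => Function.Injective (fun l => vl (P 0 l).1)), T n P)
          + ∑ P ∈ (G n).filter (fun P => ¬ Function.Injective (fun l => vl (P 0 l).1)), T n P :=
      (Finset.sum_filter_add_sum_filter_not (G n) _ (T n)).symm
    rw [hfins n, hsplit, hA n]
    ring
  have hlim1 : Tendsto (fun n : ℕ => cval * ((n.descFactorial m : ℝ) * ((n : ℝ) ^ m)⁻¹))
      atTop (nhds (cval * 1)) := (desc_tendsto m).const_mul cval
  have hlim2 : Tendsto (fun n : ℕ => ((n : ℝ) ^ m)⁻¹ *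
      (∑ P ∈ (G n).filter (fun P => ¬ Function.Injective (fun l => vl (P 0 l).1)), T n P))
      atTop (nhds 0) := by
    apply squeeze_zero_norm'
      (a := fun n : ℕ => ((2 : ℝ) ^ m * (2 ^ m * (2 ^ m * ((m : ℝ) * m))) * K) / n)
    · filter_upwards [eventually_ge_atTop 1] with n hn1
      have hn0 : (n : ℝ) ≠ 0 := by positivity
      have hnm0 : ((n : ℝ)) ^ (m - 1) ≠ 0 := by positivity
      have hpow : (n : ℝ) ^ m = (n : ℝ) ^ (m - 1) * n := by
        rw [← pow_succ]
        congr 1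
        omega
      rw [Real.norm_eq_abs, abs_mul,
        abs_of_nonneg (by positivity : (0 : ℝ) ≤ ((n : ℝ) ^ m)⁻¹)]
      refine le_trans (mul_le_mul_of_nonneg_left (hBsum n) (by positivity)) (le_of_eq ?_)
      push_cast
      rw [hpow]
      field_simp
    · exact tendsto_const_div_atTop_nhds_zero_nat _
  have H := (hlim1.add hlim2).congr (fun n => (hexpr n).symm)
  have hfinal : cval * 1 + 0 = (if Odd m then (0 : ℝ) else 2 ^ (m + 1) * σ ^ (2 * m)) := by
    rw [mul_one, add_zero, hcval, hK]
    by_cases hodd : Odd m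
    · rw [if_pos hodd, Odd.neg_one_pow hodd]
      ring
    · rw [if_neg hodd, Even.neg_one_pow (Nat.not_odd_iff_even.mp hodd), pow_mul, pow_succ]
      ring
  rw [hfinal] at H
  exact H

end CIaux
end Master

theorem stmt17
    {Ω : Type*} [MeasurableSpace Ω] (μ : Measure Ω) [IsProbabilityMeasure μ]
    (σ : ℝ) (hσ : 0 < σ)
    (X : (n : ℕ) → Fin 2 → Ω → Matrix (Fin n) (Fin n) ℝ)
    (hmeas : ∀ n i a b, Measurable fun ω => X n i ω a b)
    (hsymm : ∀ n i ω a b, X n i ω b a = X n i ω a b)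
    (hindep : ∀ n, iIndepFun
      (fun (v : {v : Fin 2 × Fin n × Fin n // v.2.1 ≤ v.2.2}) ω =>
        X n v.1.1 ω v.1.2.1 v.1.2.2) μ)
    (hcent : ∀ n i a b, ∫ ω, X n i ω a b ∂μ = 0)
    (hvar : ∀ n i (a b : Fin n), ∫ ω, |X n i ω a b| ^ 2 ∂μ = σ ^ 2)
    (hmom : ∀ k : ℕ, ∃ C : ℝ, ∀ n i (a b : Fin n),
      ∫ ω, |X n i ω a b| ^ k ∂μ ≤ C)
    (m : ℕ) [NeZero m] (hm : 3 ≤ m)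
    -- `g ∈ D_{2m}`: in the `0`-based labels `Fin m` of `[m]`, `γ : l ↦ l + 1` and
    -- `τ : l ↦ -l - 1`, so `g` is either `γ^ν : l ↦ l + ν` or `τγ^ν : l ↦ -(l + ν) - 1`.
    (g : Fin m → Fin m)
    (hg : (∃ ν : Fin m, g = fun l => l + ν) ∨ (∃ ν : Fin m, g = fun l => -(l + ν) - 1)) :
    Tendsto (fun n : ℕ =>
      ((n : ℝ) ^ m)⁻¹ *
        ∑ᶠ P ∈ {P : Fin 2 → Fin m → ((Fin n ⊕ Fin n) × (Fin n ⊕ Fin n)) |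
            SGoodCI n m g P},
          ∏ l : Fin m, ∫ ω, cIBlock (X n 0 ω) (X n 1 ω) (P 0 l).1 (P 0 l).2 *
            cIBlock (X n 0 ω) (X n 1 ω) (P 1 (g l)).1 (P 1 (g l)).2 ∂μ)
      atTop
      (nhds (if Odd m then 0 else 2 ^ (m + 1) * σ ^ (2 * m))) := by
  rcases hg with ⟨ν, rfl⟩ | ⟨ν, rfl⟩
  · refine CIaux.master μ σ X hsymm hvar m hm _
      (Equiv.addRight ν) (Equiv.addRight (-ν)) (fun l => rfl) ?_
    intro j
    left
    rw [Equiv.addRight_symm]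
    constructor
    · rfl
    · show (j + 1) + -ν = (j + -ν) + 1
      abel
  · have hinv : Function.Involutive (fun l : Fin m => -(l + ν) - 1) := by
      intro l; open Fin.CommRing in ring
    have hinv2 : Function.Involutive (fun l : Fin m => -l - ν) := by
      intro l; open Fin.CommRing in ring
    refine CIaux.master μ σ X hsymm hvar m hm _
      hinv.toPerm hinv2.toPerm (fun l => rfl) ?_
    intro j
    right
    constructor
    · show -j - ν = (-(j + ν) - 1) + 1
      abel
    · show -(j + 1) - ν = -(j + ν) - 1
      abel
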